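/- Let P be a regular n×n complex matrix polynomial of degree d, let ℓ ≥ 1 divide d, and let ℒ(λ) be an (ε,n,η,n)-block Kronecker ℓ-ification of P built from a solution M(λ) of (Λ_η(λ^ℓ)^T ⊗ I_n) M(λ) (Λ_ε(λ^ℓ) ⊗ I_n) = P(λ). Let λ0 ∈ ℂ be a finite eigenvalue of P, i.e., det P(λ0) = 0. Then a nonzero vector z ∈ ℂ^{(d/ℓ)n} satisfies ℒ(λ0) z = 0 if and only if z = H(λ0; ε, η, M) x for some nonzero x ∈ ℂ^n with P(λ0) x = 0. -/

import Mathlib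

open Matrix BigOperators

noncomputable section

/-- Evaluation at `x` of the matrix polynomial with coefficients `C 0, …, C N`. -/
def mpEval {α β : Type*} (N : ℕ) (C : ℕ → Matrix α β ℂ) (x : ℂ) : Matrix α β ℂ :=
  ∑ i ∈ Finset.range (N + 1), x ^ i • C i

/-- Entrywise derivative of the matrix polynomial, evaluated at `x`. -/
def mpDer {α β : Type*} (N : ℕ) (C : ℕ → Matrix α β ℂ) (x : ℂ) : Matrix α β ℂ :=
  ∑ i ∈ Finset.range (N + 1), ((i : ℂ) * x ^ (i - 1)) • C i

/-- Spectral norm (operator 2-norm, i.e. largest singular value) of a complex matrix. -/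
def sNorm {α β : Type*} [Fintype α] [Fintype β] [DecidableEq β] (A : Matrix α β ℂ) : ℝ :=
  ‖LinearMap.toContinuousLinearMap (Matrix.toEuclideanLin A)‖

/-- Euclidean norm of a complex vector. -/
def vNorm {α : Type*} [Fintype α] (v : α → ℂ) : ℝ :=
  Real.sqrt (∑ i, ‖v i‖ ^ 2)

/-- `Λ_k(x^ℓ) ⊗ I_n`, a `(k+1)n × n` matrix whose `i`-th (0-based) `n × n` block is
`x^(ℓ(k−i)) I_n`. -/
def LamI (n k l : ℕ) (x : ℂ) : Matrix (Fin (k + 1) × Fin n) (Fin n) ℂ :=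
  Matrix.of fun p s => if p.2 = s then x ^ (l * (k - (p.1 : ℕ))) else 0

/-- `L_k(x^ℓ) ⊗ I_n`, a `kn × (k+1)n` matrix. -/
def LkI (n k l : ℕ) (x : ℂ) : Matrix (Fin k × Fin n) (Fin (k + 1) × Fin n) ℂ :=
  Matrix.of fun p q =>
    if p.2 = q.2 then
      if (q.1 : ℕ) = (p.1 : ℕ) then -1
      else if (q.1 : ℕ) = (p.1 : ℕ) + 1 then x ^ l else 0
    else 0

/-- The degree-`0` coefficient of `L_k(λ^ℓ) ⊗ I_n`. -/
def LkI0 (n k : ℕ) : Matrix (Fin k × Fin n) (Fin (k + 1) × Fin n) ℂ :=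
  Matrix.of fun p q => if p.2 = q.2 ∧ (q.1 : ℕ) = (p.1 : ℕ) then -1 else 0

/-- The degree-`ℓ` coefficient of `L_k(λ^ℓ) ⊗ I_n`. -/
def LkI1 (n k : ℕ) : Matrix (Fin k × Fin n) (Fin (k + 1) × Fin n) ℂ :=
  Matrix.of fun p q => if p.2 = q.2 ∧ (q.1 : ℕ) = (p.1 : ℕ) + 1 then 1 else 0

/-- `R_k(x^ℓ)`: `n × n` blocks `x^(ℓ(i−j)) I_n` for `j ≤ i` (0-based), `0` otherwise. -/
def Rmat (n k l : ℕ) (x : ℂ) : Matrix (Fin k × Fin n) (Fin (k + 1) × Fin n) ℂ :=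
  Matrix.of fun p q =>
    if p.2 = q.2 ∧ (q.1 : ℕ) ≤ (p.1 : ℕ) then x ^ (l * ((p.1 : ℕ) - (q.1 : ℕ))) else 0

/-- `S_k(x^ℓ)`: `n × n` blocks `x^(ℓ(k+i−j)) I_n` for `i < j` (0-based), `0` otherwise. -/
def Smat (n k l : ℕ) (x : ℂ) : Matrix (Fin k × Fin n) (Fin (k + 1) × Fin n) ℂ :=
  Matrix.of fun p q =>
    if p.2 = q.2 ∧ (p.1 : ℕ) < (q.1 : ℕ) then x ^ (l * (k + (p.1 : ℕ) - (q.1 : ℕ))) else 0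

/-- The block column `H(x; p, q, N) = [Λ_p(x^ℓ) ⊗ I_n ; R_q(x^ℓ) N(x) (Λ_p(x^ℓ) ⊗ I_n)]`. -/
def Hmat (n l p q : ℕ) (N : ℂ → Matrix (Fin (q + 1) × Fin n) (Fin (p + 1) × Fin n) ℂ)
    (x : ℂ) : Matrix ((Fin (p + 1) × Fin n) ⊕ (Fin q × Fin n)) (Fin n) ℂ :=
  Matrix.of fun r c =>
    Sum.elim (fun a => LamI n p l x a c)
      (fun a => (Rmat n q l x * (N x * LamI n p l x)) a c) r

/-- The block column `G(x; p, q, N) = [x^(qℓ)(Λ_p(x^ℓ) ⊗ I_n) ; −S_q(x^ℓ) N(x) (Λ_p(x^ℓ) ⊗ I_n)]`. -/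
def Gmat (n l p q : ℕ) (N : ℂ → Matrix (Fin (q + 1) × Fin n) (Fin (p + 1) × Fin n) ℂ)
    (x : ℂ) : Matrix ((Fin (p + 1) × Fin n) ⊕ (Fin q × Fin n)) (Fin n) ℂ :=
  Matrix.of fun r c =>
    Sum.elim (fun a => x ^ (q * l) * LamI n p l x a c)
      (fun a => (-(Smat n q l x * (N x * LamI n p l x))) a c) r

/-- Coefficients of the `(ε,n,η,n)`-block Kronecker `ℓ`-ification
`ℒ(λ) = [[M(λ), L_η(λ^ℓ)ᵀ ⊗ I_n], [L_ε(λ^ℓ) ⊗ I_n, 0]]`. -/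
def LcalCoef (n l ε η : ℕ)
    (M : ℕ → Matrix (Fin (η + 1) × Fin n) (Fin (ε + 1) × Fin n) ℂ) (i : ℕ) :
    Matrix ((Fin (η + 1) × Fin n) ⊕ (Fin ε × Fin n))
      ((Fin (ε + 1) × Fin n) ⊕ (Fin η × Fin n)) ℂ :=
  Matrix.fromBlocks (M i)
    (if i = 0 then (LkI0 n η)ᵀ else if i = l then (LkI1 n η)ᵀ else 0)
    (if i = 0 then LkI0 n ε else if i = l then LkI1 n ε else 0) 0

/-- `det P(λ)` as a scalar polynomial, where `P(λ) = Σ_{i=0}^d A_i λ^i`. -/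
def detPoly (n d : ℕ) (A : ℕ → Matrix (Fin n) (Fin n) ℂ) : Polynomial ℂ :=
  (∑ i ∈ Finset.range (d + 1), (Polynomial.X : Polynomial ℂ) ^ i • (A i).map Polynomial.C).det

/-- The horizontal concatenation `[A_0 A_1 ⋯ A_d]`. -/
def rowConcat (n d : ℕ) (A : ℕ → Matrix (Fin n) (Fin n) ℂ) :
    Matrix (Fin n) (Fin (d + 1) × Fin n) ℂ :=
  Matrix.of fun r q => A (q.1 : ℕ) r q.2

/-- Coefficientwise eigenvalue condition number of `Q(λ) = Σ_{i=0}^N C_i λ^i` at the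
eigentriple `(v, x0, u)`. -/
def coeffCond {α β : Type*} [Fintype α] [Fintype β] [DecidableEq β] (N : ℕ)
    (C : ℕ → Matrix α β ℂ) (x0 : ℂ) (u : β → ℂ) (v : α → ℂ) : ℝ :=
  (∑ i ∈ Finset.range (N + 1), ‖x0‖ ^ i * sNorm (C i)) * vNorm u * vNorm v /
    (‖x0‖ * ‖dotProduct (star v) ((mpDer N C x0).mulVec u)‖)

/-- Normwise eigenvalue condition number of `P(λ) = Σ_{i=0}^d A_i λ^i` at `(y, x0, x)`. -/
def normCond (n d : ℕ) (A : ℕ → Matrix (Fin n) (Fin n) ℂ) (x0 : ℂ)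
    (x y : Fin n → ℂ) : ℝ :=
  sNorm (rowConcat n d A) * (∑ i ∈ Finset.range (d + 1), ‖x0‖ ^ i) *
      vNorm x * vNorm y /
    (‖x0‖ * ‖dotProduct (star y) ((mpDer d A x0).mulVec x)‖)

/-- Each `n × n` block of each coefficient `M_t`, `t = 0, …, ℓ`, is `0`, `I_n`,
or one of the coefficients `A_s` of `P`.  -/
def IsCompanionM (n d l ε η : ℕ) (A : ℕ → Matrix (Fin n) (Fin n) ℂ)
    (M : ℕ → Matrix (Fin (η + 1) × Fin n) (Fin (ε + 1) × Fin n) ℂ) : Prop :=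
  ∀ t ≤ l, ∀ (i : Fin (η + 1)) (j : Fin (ε + 1)),
    (Matrix.of fun r s => M t (i, r) (j, s)) = 0 ∨
    (Matrix.of fun r s => M t (i, r) (j, s)) = (1 : Matrix (Fin n) (Fin n) ℂ) ∨
    ∃ s ≤ d, (Matrix.of fun r s' => M t (i, r) (j, s')) = A s


section AuxLemmas

lemma lamI_mulVec (n k l : ℕ) (x : ℂ) (v : Fin n → ℂ) (i : Fin (k+1)) (r : Fin n) :
    (LamI n k l x *ᵥ v) (i, r) = x ^ (l * (k - (i : ℕ))) * v r := by
  simp [Matrix.mulVec, dotProduct, LamI, ite_mul]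

lemma lamIT_mulVec (n k l : ℕ) (x : ℂ) (w : Fin (k+1) × Fin n → ℂ) (r : Fin n) :
    ((LamI n k l x)ᵀ *ᵥ w) r = ∑ j : Fin (k+1), x ^ (l * (k - (j : ℕ))) * w (j, r) := by
  simp [Matrix.mulVec, dotProduct, LamI, Fintype.sum_prod_type, ite_mul]

lemma lkI_mulVec (n k l : ℕ) (x : ℂ) (w : Fin (k+1) × Fin n → ℂ) (p : Fin k) (r : Fin n) :
    (LkI n k l x *ᵥ w) (p, r) = -w (p.castSucc, r) + x ^ l * w (p.succ, r) := by
  unfold Matrix.mulVec dotProduct LkI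
  rw [Fintype.sum_prod_type]
  have h1 : ∀ q1 : Fin (k+1), ∑ q2 : Fin n,
      (Matrix.of fun (p : Fin k × Fin n) (q : Fin (k+1) × Fin n) =>
        if p.2 = q.2 then
          if (q.1 : ℕ) = (p.1 : ℕ) then (-1 : ℂ)
          else if (q.1 : ℕ) = (p.1 : ℕ) + 1 then x ^ l else 0
        else 0) (p, r) (q1, q2) * w (q1, q2)
      = (if (q1 : ℕ) = (p : ℕ) then (-1:ℂ) else if (q1:ℕ) = (p:ℕ) + 1 then x ^ l else 0)
          * w (q1, r) := by
    intro q1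
    simp [ite_mul]
  simp only [h1]
  rw [Finset.sum_eq_add p.castSucc p.succ (by simp [Fin.ext_iff])]
  · simp [Fin.ext_iff]
  · intro c _ hc
    have h2 : (c : ℕ) ≠ (p : ℕ) := fun h => hc.1 (Fin.ext (by simp [h]))
    have h3 : (c : ℕ) ≠ (p : ℕ) + 1 := fun h => hc.2 (Fin.ext (by simp [h]))
    simp [h2, h3]
  · simp
  · simp

lemma rmat_mulVec (n k l : ℕ) (x : ℂ) (w : Fin (k+1) × Fin n → ℂ) (p : Fin k) (r : Fin n) :
    (Rmat n k l x *ᵥ w) (p, r)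
      = ∑ j : Fin (k+1), if (j : ℕ) ≤ (p : ℕ) then x ^ (l * ((p:ℕ) - (j:ℕ))) * w (j, r) else 0 := by
  unfold Matrix.mulVec dotProduct Rmat
  rw [Fintype.sum_prod_type]
  refine Finset.sum_congr rfl fun j _ => ?_
  simp [ite_and, ite_mul]

lemma lkI_lamI_vec (n k l : ℕ) (x : ℂ) (v : Fin n → ℂ) :
    LkI n k l x *ᵥ (LamI n k l x *ᵥ v) = 0 := by
  funext pr
  obtain ⟨p, r⟩ := pr
  rw [lkI_mulVec, lamI_mulVec, lamI_mulVec]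
  have hp : (p : ℕ) < k := p.isLt
  have he : l + l * (k - ((p : ℕ) + 1)) = l * (k - (p : ℕ)) := by
    have : k - (p : ℕ) = (k - ((p : ℕ) + 1)) + 1 := by omega
    rw [this]; ring
  simp only [Fin.coe_castSucc, Fin.val_succ, Pi.zero_apply]
  rw [← mul_assoc, ← pow_add, he]
  ring

lemma rmat_mul_lkIT (n k l : ℕ) (x : ℂ) :
    Rmat n k l x * (LkI n k l x)ᵀ = -1 := by
  ext ir pr
  obtain ⟨i, r⟩ := ir
  obtain ⟨p, r'⟩ := pr
  have h : (Rmat n k l x * (LkI n k l x)ᵀ) (i, r) (p, r')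
      = (LkI n k l x *ᵥ (fun q => Rmat n k l x (i, r) q)) (p, r') := by
    simp [Matrix.mul_apply, Matrix.mulVec, dotProduct, Matrix.transpose_apply, mul_comm]
  rw [h, lkI_mulVec]
  simp only [Rmat, Matrix.of_apply, Fin.coe_castSucc, Fin.val_succ]
  rcases Nat.lt_trichotomy (p : ℕ) (i : ℕ) with hlt | heq | hgt
  · have h1 : (p : ℕ) ≤ (i : ℕ) := le_of_lt hlt
    have h2 : (p : ℕ) + 1 ≤ (i : ℕ) := hlt
    have he : l + l * ((i : ℕ) - ((p : ℕ) + 1)) = l * ((i : ℕ) - (p : ℕ)) := by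
      have : (i : ℕ) - (p : ℕ) = ((i : ℕ) - ((p : ℕ) + 1)) + 1 := by omega
      rw [this]; ring
    have hip : ¬ (i = p) := by intro hh; subst hh; omega
    by_cases hr : r = r'
    · simp only [hr, h1, h2, and_true, if_true, if_pos rfl]
      rw [← pow_add, he]
      simp [Matrix.one_apply, Prod.ext_iff, hip]
    · simp [hr, Matrix.one_apply, Prod.ext_iff, fun h => hr h, hip]
  · have hip : i = p := Fin.ext heq.symm
    subst hip
    have h2 : ¬ ((i : ℕ) + 1 ≤ (i : ℕ)) := by omega
    by_cases hr : r = r'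
    · subst hr
      simp [h2, Matrix.one_apply]
    · simp [hr, h2, Matrix.one_apply, Prod.ext_iff]
  · have h1 : ¬ ((p : ℕ) ≤ (i : ℕ)) := by omega
    have h2 : ¬ ((p : ℕ) + 1 ≤ (i : ℕ)) := by omega
    have hip : ¬ (i = p) := by intro hh; subst hh; omega
    simp [h1, h2, Matrix.one_apply, Prod.ext_iff, hip]

lemma lkIT_mulVec (n k l : ℕ) (x : ℂ) (u : Fin k × Fin n → ℂ) (i : Fin (k+1)) (r : Fin n) :
    ((LkI n k l x)ᵀ *ᵥ u) (i, r)
      = (if h : (i : ℕ) < k then -u (⟨(i : ℕ), h⟩, r) else 0)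
        + (if h : 0 < (i : ℕ) then
            x ^ l * u (⟨(i : ℕ) - 1, by have := i.isLt; omega⟩, r) else 0) := by
  unfold Matrix.mulVec dotProduct LkI
  rw [Fintype.sum_prod_type]
  have h1 : ∀ p : Fin k, ∑ q2 : Fin n,
      (Matrix.of fun (p : Fin k × Fin n) (q : Fin (k+1) × Fin n) =>
        if p.2 = q.2 then
          if (q.1 : ℕ) = (p.1 : ℕ) then (-1 : ℂ)
          else if (q.1 : ℕ) = (p.1 : ℕ) + 1 then x ^ l else 0
        else 0)ᵀ (i, r) (p, q2) * u (p, q2)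
      = (if (i : ℕ) = (p : ℕ) then (-1:ℂ) else if (i:ℕ) = (p:ℕ) + 1 then x ^ l else 0)
          * u (p, r) := by
    intro p
    simp [Matrix.transpose_apply, ite_mul]
  simp only [h1]
  rcases Nat.lt_or_ge (i : ℕ) k with hik | hik
  · rcases Nat.eq_zero_or_pos (i : ℕ) with h0 | h0
    · rw [dif_pos hik, dif_neg (by omega), add_zero]
      rw [Finset.sum_eq_single (⟨(i : ℕ), hik⟩ : Fin k)]
      · simp
      · intro b _ hb
        have hb1 : (i : ℕ) ≠ (b : ℕ) := fun h => hb (Fin.ext h.symm)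
        have hb2 : (i : ℕ) ≠ (b : ℕ) + 1 := by omega
        simp [hb1, hb2]
      · simp
    · rw [dif_pos hik, dif_pos h0]
      rw [Finset.sum_eq_add (⟨(i : ℕ), hik⟩ : Fin k)
          (⟨(i : ℕ) - 1, by omega⟩ : Fin k) (by simp [Fin.ext_iff]; omega)]
      · have hne : ¬ ((i : ℕ) = (i : ℕ) - 1) := by omega
        have heq : (i : ℕ) = ((i : ℕ) - 1) + 1 := by omega
        show (if (i:ℕ) = (i:ℕ) then (-1:ℂ) else _) * _
            + (if (i:ℕ) = (i:ℕ) - 1 then (-1:ℂ)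
                else if (i:ℕ) = ((i:ℕ) - 1) + 1 then x ^ l else 0) * _ = _
        rw [if_pos rfl, if_neg hne, if_pos heq]
        ring
      · intro c _ hc
        have hb1 : (i : ℕ) ≠ (c : ℕ) := fun h => hc.1 (Fin.ext h.symm)
        have hb2 : (i : ℕ) ≠ (c : ℕ) + 1 := fun h =>
          hc.2 (Fin.ext (show (c : ℕ) = (i : ℕ) - 1 by omega))
        simp [hb1, hb2]
      · simp
      · simp
  · have hval : (i : ℕ) = k := by have := i.isLt; omega
    rcases Nat.eq_zero_or_pos k with hk | hk
    · subst hk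
      rw [dif_neg (by omega), dif_neg (by omega)]
      simp
    · rw [dif_neg (by omega), dif_pos (by omega), zero_add]
      rw [Finset.sum_eq_single (⟨(i : ℕ) - 1, by omega⟩ : Fin k)]
      · have hb1 : ¬ ((i : ℕ) = (i : ℕ) - 1) := by omega
        have heq : (i : ℕ) = ((i : ℕ) - 1) + 1 := by omega
        show (if (i:ℕ) = (i:ℕ) - 1 then (-1:ℂ)
            else if (i:ℕ) = ((i:ℕ) - 1) + 1 then x ^ l else 0) * _ = _
        rw [if_neg hb1, if_pos heq]
      · intro b _ hb
        have hb1 : (i : ℕ) ≠ (b : ℕ) := by have := b.isLt; omega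
        have hb2 : (i : ℕ) ≠ (b : ℕ) + 1 := fun h =>
          hb (Fin.ext (show (b : ℕ) = (i : ℕ) - 1 by omega))
        simp [hb1, hb2]
      · simp

lemma key (n k l : ℕ) (x : ℂ) (w : Fin (k+1) × Fin n → ℂ) (i : Fin (k+1)) (r : Fin n) :
    w (i, r) + ((LkI n k l x)ᵀ *ᵥ (Rmat n k l x *ᵥ w)) (i, r)
      = if (i : ℕ) = k then ∑ j : Fin (k+1), x ^ (l * (k - (j:ℕ))) * w (j, r) else 0 := by
  rw [lkIT_mulVec]
  rcases Nat.lt_or_ge (i : ℕ) k with hik | hik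
  · rw [if_neg (by omega), dif_pos hik, rmat_mulVec]
    rcases Nat.eq_zero_or_pos (i : ℕ) with h0 | h0
    · rw [dif_neg (by omega), add_zero]
      have hs : (∑ j : Fin (k+1), if (j : ℕ) ≤ ((⟨(i:ℕ), hik⟩ : Fin k) : ℕ) then
            x ^ (l * ((((⟨(i:ℕ), hik⟩ : Fin k)) : ℕ) - (j:ℕ))) * w (j, r) else 0)
          = w (i, r) := by
        rw [Finset.sum_eq_single i]
        · simp [h0]
        · intro b _ hb
          have hne : ¬ ((b : ℕ) ≤ ((⟨(i:ℕ), hik⟩ : Fin k) : ℕ)) := by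
            have : (b : ℕ) ≠ (i : ℕ) := fun h => hb (Fin.ext h)
            show ¬ ((b : ℕ) ≤ (i : ℕ))
            omega
          rw [if_neg hne]
        · simp
      rw [hs]
      ring
    · rw [dif_pos h0, rmat_mulVec]
      set i' : Fin k := ⟨(i : ℕ), hik⟩ with hi'
      set i'' : Fin k := ⟨(i : ℕ) - 1, by omega⟩ with hi''
      have hT : x ^ l * (∑ j : Fin (k+1), if (j : ℕ) ≤ (i'' : ℕ) then
            x ^ (l * ((i'' : ℕ) - (j:ℕ))) * w (j, r) else 0)
          = ∑ j : Fin (k+1), if (j : ℕ) ≤ (i : ℕ) - 1 then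
            x ^ (l * ((i : ℕ) - (j:ℕ))) * w (j, r) else 0 := by
        rw [Finset.mul_sum]
        refine Finset.sum_congr rfl fun j _ => ?_
        have hv : (i'' : ℕ) = (i : ℕ) - 1 := rfl
        rw [hv]
        split_ifs with hj
        · rw [← mul_assoc, ← pow_add]
          congr 2
          have : (i : ℕ) - (j : ℕ) = (((i : ℕ) - 1) - (j : ℕ)) + 1 := by omega
          rw [this]; ring
        · rw [mul_zero]
      have hS : (∑ j : Fin (k+1), if (j : ℕ) ≤ (i' : ℕ) then
            x ^ (l * ((i' : ℕ) - (j:ℕ))) * w (j, r) else 0)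
          = (∑ j : Fin (k+1), if (j : ℕ) ≤ (i : ℕ) - 1 then
            x ^ (l * ((i : ℕ) - (j:ℕ))) * w (j, r) else 0) + w (i, r) := by
        have hw : w (i, r) = ∑ j : Fin (k+1), if j = i then w (j, r) else 0 := by
          rw [Finset.sum_ite_eq' Finset.univ i (fun j => w (j, r))]
          simp
        rw [hw, ← Finset.sum_add_distrib]
        refine Finset.sum_congr rfl fun j _ => ?_
        have hv : (i' : ℕ) = (i : ℕ) := rfl
        rw [hv]
        by_cases hji : j = i
        · subst hji
          rw [if_pos (le_refl _), if_neg (by omega), if_pos rfl]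
          simp
        · have hvne : (j : ℕ) ≠ (i : ℕ) := fun h => hji (Fin.ext h)
          rw [if_neg hji, add_zero]
          by_cases hle : (j : ℕ) ≤ (i : ℕ) - 1
          · rw [if_pos hle, if_pos (by omega)]
          · rw [if_neg hle, if_neg (by omega)]
      rw [hT, hS]
      ring
  · have hval : (i : ℕ) = k := by have := i.isLt; omega
    rw [if_pos hval, dif_neg (by omega), zero_add]
    rcases Nat.eq_zero_or_pos k with hk | hk
    · rw [dif_neg (by omega)]
      have h0 : i = (0 : Fin (k+1)) := Fin.ext (by simp [hval, hk])
      subst hk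
      rw [h0]
      simp
    · rw [dif_pos (by omega), rmat_mulVec]
      set i'' : Fin k := ⟨(i : ℕ) - 1, by omega⟩ with hi''
      have hT : x ^ l * (∑ j : Fin (k+1), if (j : ℕ) ≤ (i'' : ℕ) then
            x ^ (l * ((i'' : ℕ) - (j:ℕ))) * w (j, r) else 0)
          = ∑ j : Fin (k+1), if (j : ℕ) ≤ k - 1 then
            x ^ (l * (k - (j:ℕ))) * w (j, r) else 0 := by
        rw [Finset.mul_sum]
        refine Finset.sum_congr rfl fun j _ => ?_
        have hv : (i'' : ℕ) = k - 1 := by simp [hi'', hval]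
        rw [hv]
        split_ifs with hj
        · rw [← mul_assoc, ← pow_add]
          congr 2
          have : k - (j : ℕ) = ((k - 1) - (j : ℕ)) + 1 := by omega
          rw [this]; ring
        · rw [mul_zero]
      rw [hT]
      have hS : (∑ j : Fin (k+1), x ^ (l * (k - (j:ℕ))) * w (j, r))
          = (∑ j : Fin (k+1), if (j : ℕ) ≤ k - 1 then
            x ^ (l * (k - (j:ℕ))) * w (j, r) else 0) + w (i, r) := by
        have hw : w (i, r) = ∑ j : Fin (k+1), if j = i then w (j, r) else 0 := by
          rw [Finset.sum_ite_eq' Finset.univ i (fun j => w (j, r))]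
          simp
        rw [hw, ← Finset.sum_add_distrib]
        refine Finset.sum_congr rfl fun j _ => ?_
        by_cases hji : j = i
        · subst hji
          rw [if_neg (by omega), if_pos rfl, zero_add]
          have hz0 : k - (j : ℕ) = 0 := by omega
          rw [hz0]
          simp
        · have hvne : (j : ℕ) ≠ (i : ℕ) := fun h => hji (Fin.ext h)
          have hjlt : (j : ℕ) ≤ k - 1 := by have := j.isLt; omega
          rw [if_pos hjlt, if_neg hji, add_zero]
      rw [hS]
      ring

lemma lkI_split (n k l : ℕ) (x : ℂ) (p : Fin k × Fin n) (q : Fin (k+1) × Fin n) :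
    LkI n k l x p q = LkI0 n k p q + x ^ l * LkI1 n k p q := by
  obtain ⟨p1, p2⟩ := p
  obtain ⟨q1, q2⟩ := q
  simp only [LkI, LkI0, LkI1, Matrix.of_apply]
  by_cases h2 : p2 = q2
  · subst h2
    by_cases ha : (q1 : ℕ) = (p1 : ℕ)
    · have hb : ¬ ((q1 : ℕ) = (p1 : ℕ) + 1) := by omega
      simp [ha, hb]
    · by_cases hb : (q1 : ℕ) = (p1 : ℕ) + 1
      · simp [ha, hb]
      · simp [ha, hb]
  · simp [h2]

lemma sum_ite_two (l : ℕ) (hl : 1 ≤ l) (f : ℕ → ℂ) (a b : ℂ) :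
    (∑ i ∈ Finset.range (l+1), f i * (if i = 0 then a else if i = l then b else 0))
      = f 0 * a + f l * b := by
  rw [Finset.sum_eq_add 0 l (by omega)]
  · rw [if_pos rfl, if_neg (by omega), if_pos rfl]
  · intro c _ hcc
    rw [if_neg hcc.1, if_neg hcc.2, mul_zero]
  · intro h
    exact absurd (Finset.mem_range.mpr (by omega)) h
  · intro h
    exact absurd (Finset.mem_range.mpr (by omega)) h

lemma lcal_eval (n l ε η : ℕ) (hl : 1 ≤ l)
    (M : ℕ → Matrix (Fin (η + 1) × Fin n) (Fin (ε + 1) × Fin n) ℂ) (x : ℂ) :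
    mpEval l (LcalCoef n l ε η M) x
      = Matrix.fromBlocks (mpEval l M x) (LkI n η l x)ᵀ (LkI n ε l x) 0 := by
  ext a b
  rcases a with a | a <;> rcases b with b | b
  · simp [mpEval, LcalCoef, Matrix.sum_apply]
  · simp only [mpEval, LcalCoef, Matrix.sum_apply, Matrix.smul_apply,
      Matrix.fromBlocks_apply₁₂, smul_eq_mul]
    have h1 : ∀ i : ℕ, ((if i = 0 then (LkI0 n η)ᵀ else if i = l then (LkI1 n η)ᵀ
          else (0 : Matrix (Fin (η+1) × Fin n) (Fin η × Fin n) ℂ)) a b)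
        = (if i = 0 then (LkI0 n η)ᵀ a b else if i = l then (LkI1 n η)ᵀ a b else 0) := by
      intro i
      split_ifs <;> first | rfl | simp
    simp only [h1]
    rw [sum_ite_two l hl (fun i => x ^ i) _ _]
    rw [Matrix.transpose_apply, Matrix.transpose_apply, Matrix.transpose_apply,
      lkI_split n η l x b a]
    ring
  · simp only [mpEval, LcalCoef, Matrix.sum_apply, Matrix.smul_apply,
      Matrix.fromBlocks_apply₂₁, smul_eq_mul]
    have h1 : ∀ i : ℕ, ((if i = 0 then LkI0 n ε else if i = l then LkI1 n ε
          else (0 : Matrix (Fin ε × Fin n) (Fin (ε+1) × Fin n) ℂ)) a b)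
        = (if i = 0 then LkI0 n ε a b else if i = l then LkI1 n ε a b else 0) := by
      intro i
      split_ifs <;> first | rfl | simp
    simp only [h1]
    rw [sum_ite_two l hl (fun i => x ^ i) _ _]
    rw [lkI_split n ε l x a b]
    ring
  · simp [mpEval, LcalCoef, Matrix.sum_apply]

lemma hmat_mulVec (n l p q : ℕ)
    (N : ℂ → Matrix (Fin (q + 1) × Fin n) (Fin (p + 1) × Fin n) ℂ) (x : ℂ) (v : Fin n → ℂ) :
    Hmat n l p q N x *ᵥ v
      = Sum.elim (LamI n p l x *ᵥ v)
          (Rmat n q l x *ᵥ (N x *ᵥ (LamI n p l x *ᵥ v))) := by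
  funext a
  rcases a with a | a
  · rfl
  · show ((Rmat n q l x * (N x * LamI n p l x)) *ᵥ v) a = _
    rw [← Matrix.mulVec_mulVec, ← Matrix.mulVec_mulVec]
    rfl

end AuxLemmas


/-- Right eigenvector formula (via `H`): for a finite eigenvalue `lam0` of the regular
polynomial `P`, a nonzero `z` satisfies `ℒ(lam0) z = 0` iff `z = H(lam0; ε, η, M) x` for
some nonzero `x` with `P(lam0) x = 0`. -/
theorem stmt10 (n d l ε η : ℕ) (hn : 0 < n) (hl : 1 ≤ l) (hd : d = l * (ε + η + 1))
    (A : ℕ → Matrix (Fin n) (Fin n) ℂ) (hdeg : A d ≠ 0)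
    (hreg : detPoly n d A ≠ 0)
    (M : ℕ → Matrix (Fin (η + 1) × Fin n) (Fin (ε + 1) × Fin n) ℂ)
    (hM : ∀ x : ℂ, (LamI n η l x)ᵀ * mpEval l M x * LamI n ε l x = mpEval d A x)
    (lam0 : ℂ) (heig : (mpEval d A lam0).det = 0)
    (z : ((Fin (ε + 1) × Fin n) ⊕ (Fin η × Fin n)) → ℂ) (hz : z ≠ 0) :
    (mpEval l (LcalCoef n l ε η M) lam0).mulVec z = 0 ↔
      ∃ x : Fin n → ℂ, x ≠ 0 ∧ (mpEval d A lam0).mulVec x = 0 ∧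
        z = (Hmat n l ε η (mpEval l M) lam0).mulVec x := by
  classical
  have hblock : mpEval l (LcalCoef n l ε η M) lam0 *ᵥ z
      = Sum.elim (mpEval l M lam0 *ᵥ (z ∘ Sum.inl) + (LkI n η l lam0)ᵀ *ᵥ (z ∘ Sum.inr))
          (LkI n ε l lam0 *ᵥ (z ∘ Sum.inl)) := by
    rw [lcal_eval n l ε η hl M lam0, Matrix.fromBlocks_mulVec]
    simp only [Matrix.zero_mulVec, add_zero]
  have hP : ∀ v : Fin n → ℂ, mpEval d A lam0 *ᵥ v
      = (LamI n η l lam0)ᵀ *ᵥ (mpEval l M lam0 *ᵥ (LamI n ε l lam0 *ᵥ v)) := by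
    intro v
    rw [Matrix.mulVec_mulVec, Matrix.mulVec_mulVec, hM lam0]
  constructor
  · intro h0
    rw [hblock] at h0
    have eq1 : mpEval l M lam0 *ᵥ (z ∘ Sum.inl) + (LkI n η l lam0)ᵀ *ᵥ (z ∘ Sum.inr) = 0 :=
      funext fun a => congrFun h0 (Sum.inl a)
    have eq2 : LkI n ε l lam0 *ᵥ (z ∘ Sum.inl) = 0 :=
      funext fun a => congrFun h0 (Sum.inr a)
    set z1 : Fin (ε+1) × Fin n → ℂ := z ∘ Sum.inl with hz1def
    set z2 : Fin η × Fin n → ℂ := z ∘ Sum.inr with hz2def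
    set x : Fin n → ℂ := fun r => z1 (Fin.last ε, r) with hxdef
    have hz1 : ∀ (j : Fin (ε+1)) (r : Fin n), z1 (j, r) = lam0 ^ (l * (ε - (j:ℕ))) * x r := by
      intro j r
      induction j using Fin.reverseInduction with
      | last => simp [hxdef]
      | cast i ih =>
        have h2 := congrFun eq2 (i, r)
        rw [lkI_mulVec] at h2
        simp only [Pi.zero_apply] at h2
        have hstep : z1 (i.castSucc, r) = lam0 ^ l * z1 (i.succ, r) := by
          linear_combination -h2
        rw [hstep, ih, ← mul_assoc, ← pow_add]
        have hi : (i : ℕ) < ε := i.isLt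
        have h3 : ε - (i : ℕ) = (ε - ((i : ℕ) + 1)) + 1 := by omega
        have h4 : l + l * (ε - ((i : ℕ) + 1)) = l * (ε - (i : ℕ)) := by rw [h3]; ring
        simp only [Fin.val_succ, Fin.coe_castSucc]
        rw [h4]
    have hz1vec : z1 = LamI n ε l lam0 *ᵥ x := by
      funext a
      obtain ⟨j, r⟩ := a
      rw [lamI_mulVec]
      exact hz1 j r
    have hw : z2 = Rmat n η l lam0 *ᵥ (mpEval l M lam0 *ᵥ z1) := by
      have h3 : Rmat n η l lam0 *ᵥ (mpEval l M lam0 *ᵥ z1 + (LkI n η l lam0)ᵀ *ᵥ z2) = 0 := by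
        rw [eq1, Matrix.mulVec_zero]
      rw [Matrix.mulVec_add] at h3
      rw [Matrix.mulVec_mulVec z2 (Rmat n η l lam0) (LkI n η l lam0)ᵀ] at h3
      rw [rmat_mul_lkIT, Matrix.neg_mulVec, Matrix.one_mulVec] at h3
      exact (add_neg_eq_zero.mp h3).symm
    have hPx : mpEval d A lam0 *ᵥ x = 0 := by
      funext r
      have h4 := congrFun (hP x) r
      rw [h4, ← hz1vec, lamIT_mulVec]
      have hk := key n η l lam0 (mpEval l M lam0 *ᵥ z1) (Fin.last η) r
      rw [if_pos (Fin.val_last η)] at hk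
      rw [← hk, ← hw]
      have h5 := congrFun eq1 (Fin.last η, r)
      simpa using h5
    have hxne : x ≠ 0 := by
      intro hx0
      apply hz
      funext a
      rcases a with a | a
      · obtain ⟨j, r⟩ := a
        show z1 (j, r) = 0
        rw [hz1 j r, hx0]
        simp
      · show z2 a = 0
        rw [hw, hz1vec, hx0]
        simp
    refine ⟨x, hxne, hPx, ?_⟩
    funext a
    rcases a with a | a
    · obtain ⟨j, r⟩ := a
      rw [hmat_mulVec]
      show z1 (j, r) = (LamI n ε l lam0 *ᵥ x) (j, r)
      rw [lamI_mulVec]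
      exact hz1 j r
    · rw [hmat_mulVec]
      show z2 a = (Rmat n η l lam0 *ᵥ (mpEval l M lam0 *ᵥ (LamI n ε l lam0 *ᵥ x))) a
      rw [← hz1vec, ← hw]
  · rintro ⟨x, hx0, hPx, hzx⟩
    rw [hblock]
    have hz1vec : z ∘ Sum.inl = LamI n ε l lam0 *ᵥ x := by
      funext a
      show z (Sum.inl a) = _
      rw [hzx, hmat_mulVec]
      simp only [Sum.elim_inl]
    have hz2vec : z ∘ Sum.inr
        = Rmat n η l lam0 *ᵥ (mpEval l M lam0 *ᵥ (LamI n ε l lam0 *ᵥ x)) := by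
      funext a
      show z (Sum.inr a) = _
      rw [hzx, hmat_mulVec]
      simp only [Sum.elim_inr]
    funext a
    rcases a with a | a
    · obtain ⟨i, r⟩ := a
      show (mpEval l M lam0 *ᵥ (z ∘ Sum.inl) + (LkI n η l lam0)ᵀ *ᵥ (z ∘ Sum.inr)) (i, r) = 0
      rw [hz1vec, hz2vec]
      have hk := key n η l lam0 (mpEval l M lam0 *ᵥ (LamI n ε l lam0 *ᵥ x)) i r
      show (mpEval l M lam0 *ᵥ (LamI n ε l lam0 *ᵥ x)) (i, r)
          + ((LkI n η l lam0)ᵀ *ᵥ (Rmat n η l lam0 *ᵥ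
              (mpEval l M lam0 *ᵥ (LamI n ε l lam0 *ᵥ x)))) (i, r) = 0
      rw [hk]
      split_ifs with h
      · rw [← lamIT_mulVec]
        have h6 := congrFun (hP x) r
        rw [hPx] at h6
        simpa using h6.symm
      · rfl
    · show (LkI n ε l lam0 *ᵥ (z ∘ Sum.inl)) a = 0
      rw [hz1vec]
      exact congrFun (lkI_lamI_vec n ε l lam0 x) a


end
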